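/- arXiv:2202.12394 — 4 statements merged into one kernel-verified Lean document; each statement's English description precedes it below -/
import Mathlib

section
/- For all t > 0, (P(t))² < 1 - e^{-2t²/π}, where P(t) = (1/√(2π)) ∫_{-t}^{t} e^{-x²/2} dx. Equivalently, the parameter k(t) defined by P(t)² = 1 - e^{-k(t)²t²/2} satisfies k(t) < √(4/π). -/
open Real MeasureTheory
open Set

lemma hasDeriv_aux (x : ℝ) :
    HasDerivAt (fun r : ℝ => -Real.exp (-r ^ 2 / 2)) (x * Real.exp (-x ^ 2 / 2)) x := by
  have h1 : HasDerivAt (fun r : ℝ => -r ^ 2 / 2) (-x) x := by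
    have h := ((hasDerivAt_pow 2 x).div_const 2).neg
    have he : (fun r : ℝ => -(r ^ 2 / 2)) = fun r : ℝ => -r ^ 2 / 2 := by funext r; ring
    rw [show (-fun x : ℝ => x ^ 2 / 2) = fun r : ℝ => -(r ^ 2 / 2) from rfl, he] at h
    refine h.congr_deriv ?_
    simp
  have h2 := (h1.exp).neg
  refine h2.congr_deriv ?_
  ring

lemma int_aux (R : ℝ) (hR : 0 < R) :
    ∫ r in Ioo (0:ℝ) R, r * Real.exp (-r ^ 2 / 2) = 1 - Real.exp (-R ^ 2 / 2) := by
  rw [← integral_Ioc_eq_integral_Ioo, ← intervalIntegral.integral_of_le hR.le]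
  have := intervalIntegral.integral_eq_sub_of_hasDerivAt (a := 0) (b := R)
    (f := fun r : ℝ => -Real.exp (-r ^ 2 / 2)) (f' := fun x => x * Real.exp (-x ^ 2 / 2))
    (fun x _ => hasDeriv_aux x) (by apply Continuous.intervalIntegrable; fun_prop)
  rw [this]
  norm_num
  ring

lemma polar_disk (R : ℝ) (hR : 0 < R) (g : ℝ → ℝ) :
    ∫ p : ℝ × ℝ in {p : ℝ × ℝ | p.1 ^ 2 + p.2 ^ 2 < R ^ 2}, g (p.1 ^ 2 + p.2 ^ 2) =
      (∫ r in Ioo (0:ℝ) R, r * g (r ^ 2)) * (2 * π) := by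
  set B : Set (ℝ × ℝ) := {p : ℝ × ℝ | p.1 ^ 2 + p.2 ^ 2 < R ^ 2} with hB
  have hBm : MeasurableSet B := by
    have : IsOpen B := isOpen_lt (by fun_prop) continuous_const
    exact this.measurableSet
  rw [← integral_indicator hBm,
    ← integral_comp_polarCoord_symm (fun p => B.indicator (fun q : ℝ × ℝ => g (q.1 ^ 2 + q.2 ^ 2)) p)]
  have htarget : polarCoord.target = Ioi (0:ℝ) ×ˢ Ioo (-π) π := rfl
  have hcongr : EqOn
      (fun p : ℝ × ℝ => p.1 • B.indicator (fun q : ℝ × ℝ => g (q.1 ^ 2 + q.2 ^ 2)) (polarCoord.symm p))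
      (fun p : ℝ × ℝ => ((Ioo (0:ℝ) R).indicator (fun r => r * g (r ^ 2)) p.1) * (fun _ : ℝ => (1:ℝ)) p.2)
      polarCoord.target := by
    rintro ⟨r, θ⟩ hp
    rw [htarget, Set.mem_prod] at hp
    have hr : 0 < r := hp.1
    have hsymm : polarCoord.symm (r, θ) = (r * Real.cos θ, r * Real.sin θ) := rfl
    have hnorm : (r * Real.cos θ) ^ 2 + (r * Real.sin θ) ^ 2 = r ^ 2 := by
      have := Real.sin_sq_add_cos_sq θ
      nlinarith [this]
    have hmem : (r * Real.cos θ, r * Real.sin θ) ∈ B ↔ r ∈ Ioo (0:ℝ) R := by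
      simp only [hB, Set.mem_setOf_eq, hnorm, Set.mem_Ioo]
      constructor
      · intro h
        exact ⟨hr, by nlinarith⟩
      · intro h
        nlinarith [h.2]
    by_cases hc : r ∈ Ioo (0:ℝ) R
    · simp only [hsymm, Set.indicator_of_mem (hmem.2 hc), Set.indicator_of_mem hc, hnorm]
      simp [smul_eq_mul, mul_one]
    · simp only [hsymm, Set.indicator_of_notMem (fun h => hc (hmem.1 h)),
        Set.indicator_of_notMem hc, smul_zero, zero_mul]
  rw [setIntegral_congr_fun polarCoord.open_target.measurableSet hcongr, htarget,
    Measure.volume_eq_prod]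
  rw [setIntegral_prod_mul (μ := (volume : Measure ℝ)) (ν := (volume : Measure ℝ))
    (fun r : ℝ => (Ioo (0:ℝ) R).indicator (fun u => u * g (u ^ 2)) r) (fun _ : ℝ => (1:ℝ))
    (Ioi (0:ℝ)) (Ioo (-π) π)]
  rw [setIntegral_indicator measurableSet_Ioo,
    Set.inter_eq_self_of_subset_right Ioo_subset_Ioi_self, setIntegral_const]
  rw [measureReal_def, Real.volume_Ioo, ENNReal.toReal_ofReal (by linarith [Real.pi_pos]), smul_eq_mul]
  ring

lemma gauss2_integrable : Integrable (fun p : ℝ × ℝ => Real.exp (-(p.1 ^ 2 + p.2 ^ 2) / 2)) := by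
  have h := (integrable_exp_neg_mul_sq (b := 1/2) (by norm_num)).mul_prod
    (integrable_exp_neg_mul_sq (b := 1/2) (by norm_num))
  rw [← Measure.volume_eq_prod] at h
  refine h.congr (Filter.Eventually.of_forall fun p => ?_)
  dsimp only
  rw [← Real.exp_add]
  ring_nf

lemma disk_gauss (R : ℝ) (hR : 0 < R) :
    ∫ p : ℝ × ℝ in {p : ℝ × ℝ | p.1 ^ 2 + p.2 ^ 2 < R ^ 2},
      Real.exp (-(p.1 ^ 2 + p.2 ^ 2) / 2) = (1 - Real.exp (-R ^ 2 / 2)) * (2 * π) := by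
  rw [polar_disk R hR (fun u => Real.exp (-u / 2)), int_aux R hR]

lemma disk_vol (R : ℝ) (hR : 0 < R) :
    ∫ _p : ℝ × ℝ in {p : ℝ × ℝ | p.1 ^ 2 + p.2 ^ 2 < R ^ 2}, (1:ℝ) = R ^ 2 / 2 * (2 * π) := by
  rw [polar_disk R hR (fun _ => (1:ℝ))]
  congr 1
  simp only [mul_one]
  rw [← integral_Ioc_eq_integral_Ioo, ← intervalIntegral.integral_of_le hR.le,
    integral_id]
  ring

noncomputable def P (t : ℝ) : ℝ := (1 / Real.sqrt (2 * π)) * ∫ x in (-t)..t, Real.exp (-x ^ 2 / 2)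

set_option maxHeartbeats 1000000 in
theorem P_sq_lt_sharp (t : ℝ) (ht : 0 < t) :
    P t ^ 2 < 1 - Real.exp (-2 * t ^ 2 / π) := by
  have hπ : (0:ℝ) < π := Real.pi_pos
  have hsπ : 0 < Real.sqrt π := Real.sqrt_pos.2 hπ
  set R : ℝ := 2 * t / Real.sqrt π with hRdef
  have hR0 : 0 < R := by positivity
  have hRsq : R ^ 2 = 4 * t ^ 2 / π := by
    rw [hRdef, div_pow, Real.sq_sqrt hπ.le]; ring
  have hs2 : Real.sqrt π < 2 := by
    rw [show (2:ℝ) = Real.sqrt 4 by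
      rw [show (4:ℝ) = 2^2 by norm_num, Real.sqrt_sq (by norm_num)]]
    exact Real.sqrt_lt_sqrt hπ.le (by nlinarith [Real.pi_lt_d2])
  have htR : t < R := by
    rw [hRdef, lt_div_iff₀ hsπ]
    nlinarith
  set f : ℝ × ℝ → ℝ := fun p => Real.exp (-(p.1 ^ 2 + p.2 ^ 2) / 2) with hf
  set S : Set (ℝ × ℝ) := Ioc (-t) t ×ˢ Ioc (-t) t with hS
  set B : Set (ℝ × ℝ) := {p : ℝ × ℝ | p.1 ^ 2 + p.2 ^ 2 < R ^ 2} with hB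
  have hSm : MeasurableSet S := measurableSet_Ioc.prod measurableSet_Ioc
  have hBm : MeasurableSet B := by
    have : IsOpen B := isOpen_lt (by fun_prop) continuous_const
    exact this.measurableSet
  have hfi : Integrable f := gauss2_integrable
  -- volume of S
  have hvolS : volume S = ENNReal.ofReal (4 * t ^ 2) := by
    rw [hS, Measure.volume_eq_prod, Measure.prod_prod, Real.volume_Ioc,
      ← ENNReal.ofReal_mul (by linarith)]
    congr 1
    ring
  have hSfin : volume S ≠ ⊤ := by rw [hvolS]; exact ENNReal.ofReal_ne_top
  -- volume of B
  have hBsubset : B ⊆ Ioc (-R) R ×ˢ Ioc (-R) R := by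
    rintro ⟨x, y⟩ hxy
    simp only [hB, mem_setOf_eq] at hxy
    have hx := abs_lt_of_sq_lt_sq' (show x ^ 2 < R ^ 2 by nlinarith [sq_nonneg y]) hR0.le
    have hy := abs_lt_of_sq_lt_sq' (show y ^ 2 < R ^ 2 by nlinarith [sq_nonneg x]) hR0.le
    exact ⟨⟨hx.1, hx.2.le⟩, ⟨hy.1, hy.2.le⟩⟩
  have hBfin : volume B ≠ ⊤ := by
    refine ne_top_of_le_ne_top ?_ (measure_mono hBsubset)
    rw [Measure.volume_eq_prod, Measure.prod_prod]
    exact ENNReal.mul_ne_top (by simp [Real.volume_Ioc]) (by simp [Real.volume_Ioc])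
  have hvolB : volume B = ENNReal.ofReal (4 * t ^ 2) := by
    have h1 : ∫ _p in B, (1:ℝ) = (volume B).toReal := by
      rw [setIntegral_const, smul_eq_mul, mul_one, measureReal_def]
    have h2 : (volume B).toReal = 4 * t ^ 2 := by
      rw [← h1, hB, disk_vol R hR0, hRsq]
      field_simp
    rw [← ENNReal.ofReal_toReal hBfin, h2]
  have hvolSB : volume (S \ B) = volume (B \ S) := by
    have h1 := measure_inter_add_diff (μ := (volume : Measure (ℝ × ℝ))) S hBm
    have h2 := measure_inter_add_diff (μ := (volume : Measure (ℝ × ℝ))) B hSm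
    rw [inter_comm] at h2
    have hfinSB : volume (S ∩ B) ≠ ⊤ :=
      ne_top_of_le_ne_top hSfin (measure_mono inter_subset_left)
    rw [← ENNReal.add_right_inj hfinSB, h1, h2, hvolS, hvolB]
  have hSBfin : volume (S \ B) ≠ ⊤ :=
    ne_top_of_le_ne_top hSfin (measure_mono diff_subset)
  have hBSfin : volume (B \ S) ≠ ⊤ :=
    ne_top_of_le_ne_top hBfin (measure_mono diff_subset)
  -- upper bound on ∫ over S \ B
  have hub : ∫ p in S \ B, f p ≤ (volume (S \ B)).toReal * Real.exp (-R ^ 2 / 2) := by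
    have hmono : ∫ p in S \ B, f p ≤ ∫ _p in S \ B, Real.exp (-R ^ 2 / 2) := by
      refine setIntegral_mono_on hfi.integrableOn
        (integrableOn_const hSBfin) (hSm.diff hBm) ?_
      rintro ⟨x, y⟩ ⟨_, hpB⟩
      simp only [hB, mem_setOf_eq, not_lt] at hpB
      exact Real.exp_le_exp.2 (by dsimp only; linarith)
    simpa [setIntegral_const, smul_eq_mul, mul_comm, measureReal_def] using hmono
  -- the small rectangle U inside B \ S
  set m : ℝ := (t + R) / 2 with hm
  have htm : t < m := by rw [hm]; linarith
  have hmR : m < R := by rw [hm]; linarith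
  have hm0 : 0 < m := lt_trans ht htm
  set δ : ℝ := (R ^ 2 - m ^ 2) / 2 with hδ
  have hδ0 : 0 < δ := by rw [hδ]; nlinarith
  set d : ℝ := Real.sqrt δ with hd
  have hd0 : 0 < d := Real.sqrt_pos.2 hδ0
  set U : Set (ℝ × ℝ) := Ioo t m ×ˢ Ioo 0 d with hU
  have hUm : MeasurableSet U := measurableSet_Ioo.prod measurableSet_Ioo
  have hUsub : U ⊆ B \ S := by
    rintro ⟨x, y⟩ ⟨hx, hy⟩
    simp only [mem_Ioo] at hx hy
    have hysq : y ^ 2 < δ := by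
      have := Real.sq_sqrt hδ0.le
      nlinarith [hy.1, hy.2]
    have hxsq : x ^ 2 < m ^ 2 := by nlinarith [hx.1, hx.2]
    constructor
    · simp only [hB, mem_setOf_eq]
      nlinarith
    · rintro ⟨hxS, -⟩
      exact absurd hxS.2 (not_le.2 hx.1)
  have hvolU : (volume U).toReal = (m - t) * d := by
    rw [hU, Measure.volume_eq_prod, Measure.prod_prod, Real.volume_Ioo, Real.volume_Ioo,
      ← ENNReal.ofReal_mul (by linarith), ENNReal.toReal_ofReal (by nlinarith)]
    ring_nf
  have hUpos : 0 < (volume U).toReal := by rw [hvolU]; nlinarith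
  have hUfin : volume U ≠ ⊤ := ne_top_of_le_ne_top hBSfin (measure_mono hUsub)
  -- lower bound on ∫ over B \ S
  have hlb : (volume (B \ S)).toReal * Real.exp (-R ^ 2 / 2) < ∫ p in B \ S, f p := by
    have hsplit := integral_inter_add_diff (s := B \ S) hUm hfi.integrableOn
    have hBSU : (B \ S) ∩ U = U := inter_eq_self_of_subset_right hUsub
    have hvsplit : volume (B \ S) = volume U + volume ((B \ S) \ U) := by
      have := measure_inter_add_diff (μ := (volume : Measure (ℝ × ℝ))) (B \ S) hUm
      rw [hBSU] at this
      exact this.symm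
    have hWfin : volume ((B \ S) \ U) ≠ ⊤ :=
      ne_top_of_le_ne_top hBSfin (measure_mono diff_subset)
    have hvtor : (volume (B \ S)).toReal = (volume U).toReal + (volume ((B \ S) \ U)).toReal := by
      rw [hvsplit, ENNReal.toReal_add hUfin hWfin]
    set c : ℝ := m ^ 2 + δ with hc
    have hcR : c < R ^ 2 := by rw [hc, hδ]; nlinarith
    have hUlow : (volume U).toReal * Real.exp (-c / 2) ≤ ∫ p in U, f p := by
      have hmono : ∫ _p in U, Real.exp (-c / 2) ≤ ∫ p in U, f p := by
        refine setIntegral_mono_on (integrableOn_const hUfin)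
          hfi.integrableOn hUm ?_
        rintro ⟨x, y⟩ ⟨hx, hy⟩
        simp only [mem_Ioo] at hx hy
        have hysq : y ^ 2 < δ := by
          have := Real.sq_sqrt hδ0.le
          nlinarith [hy.1, hy.2]
        have hxsq : x ^ 2 < m ^ 2 := by nlinarith [hx.1, hx.2]
        exact Real.exp_le_exp.2 (by dsimp only; rw [hc]; linarith)
      simpa [setIntegral_const, smul_eq_mul, mul_comm, measureReal_def] using hmono
    have hWlow : (volume ((B \ S) \ U)).toReal * Real.exp (-R ^ 2 / 2)
        ≤ ∫ p in (B \ S) \ U, f p := by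
      have hmono : ∫ _p in (B \ S) \ U, Real.exp (-R ^ 2 / 2) ≤ ∫ p in (B \ S) \ U, f p := by
        refine setIntegral_mono_on (integrableOn_const hWfin)
          hfi.integrableOn ((hBm.diff hSm).diff hUm) ?_
        rintro ⟨x, y⟩ ⟨⟨hpB, -⟩, -⟩
        simp only [hB, mem_setOf_eq] at hpB
        exact Real.exp_le_exp.2 (by dsimp only; linarith)
      simpa [setIntegral_const, smul_eq_mul, mul_comm, measureReal_def] using hmono
    have hexplt : Real.exp (-R ^ 2 / 2) < Real.exp (-c / 2) :=
      Real.exp_lt_exp.2 (by linarith)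
    calc (volume (B \ S)).toReal * Real.exp (-R ^ 2 / 2)
        = (volume U).toReal * Real.exp (-R ^ 2 / 2)
          + (volume ((B \ S) \ U)).toReal * Real.exp (-R ^ 2 / 2) := by rw [hvtor]; ring
      _ < (volume U).toReal * Real.exp (-c / 2)
          + (volume ((B \ S) \ U)).toReal * Real.exp (-R ^ 2 / 2) := by
          have := mul_lt_mul_of_pos_left hexplt hUpos
          linarith
      _ ≤ (∫ p in U, f p) + ∫ p in (B \ S) \ U, f p := add_le_add hUlow hWlow
      _ = ∫ p in B \ S, f p := by rw [← hsplit, hBSU]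
  -- strict inequality between the two integrals
  have hmain : ∫ p in S, f p < ∫ p in B, f p := by
    have hS_split := integral_inter_add_diff (s := S) hBm hfi.integrableOn
    have hB_split := integral_inter_add_diff (s := B) hSm hfi.integrableOn
    rw [inter_comm] at hB_split
    have hvt : (volume (S \ B)).toReal = (volume (B \ S)).toReal := by rw [hvolSB]
    rw [← hS_split, ← hB_split]
    have : ∫ p in S \ B, f p < ∫ p in B \ S, f p := by
      calc ∫ p in S \ B, f p ≤ (volume (S \ B)).toReal * Real.exp (-R ^ 2 / 2) := hub
        _ = (volume (B \ S)).toReal * Real.exp (-R ^ 2 / 2) := by rw [hvt]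
        _ < ∫ p in B \ S, f p := hlb
    linarith
  -- identify P t ^ 2 with the integral over S
  have hPsq : P t ^ 2 = (1 / (2 * π)) * ∫ p in S, f p := by
    have hle : -t ≤ t := by linarith
    have hI : ∫ x in (-t)..t, Real.exp (-x ^ 2 / 2)
        = ∫ x in Ioc (-t) t, Real.exp (-x ^ 2 / 2) := intervalIntegral.integral_of_le hle
    have hprod : ∫ p in S, f p
        = (∫ x in Ioc (-t) t, Real.exp (-x ^ 2 / 2))
          * ∫ x in Ioc (-t) t, Real.exp (-x ^ 2 / 2) := by
      have hcongr : EqOn f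
          (fun p : ℝ × ℝ => (fun x => Real.exp (-x ^ 2 / 2)) p.1
            * (fun x => Real.exp (-x ^ 2 / 2)) p.2) S := by
        rintro ⟨x, y⟩ -
        simp only [hf, ← Real.exp_add]
        ring_nf
      rw [setIntegral_congr_fun hSm hcongr, hS, Measure.volume_eq_prod]
      rw [setIntegral_prod_mul (μ := (volume : Measure ℝ)) (ν := (volume : Measure ℝ))
        (fun x : ℝ => Real.exp (-x ^ 2 / 2)) (fun x : ℝ => Real.exp (-x ^ 2 / 2))
        (Ioc (-t) t) (Ioc (-t) t)]
    have hsq : (1 / Real.sqrt (2 * π)) ^ 2 = 1 / (2 * π) := by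
      rw [div_pow, one_pow, Real.sq_sqrt (by positivity)]
    rw [P, mul_pow, hsq, hI, sq, hprod]
  have hexp_eq : -R ^ 2 / 2 = -2 * t ^ 2 / π := by
    rw [hRsq]
    field_simp
    ring
  calc P t ^ 2 = (1 / (2 * π)) * ∫ p in S, f p := hPsq
    _ < (1 / (2 * π)) * ∫ p in B, f p := by
        exact mul_lt_mul_of_pos_left hmain (by positivity)
    _ = 1 - Real.exp (-2 * t ^ 2 / π) := by
        rw [hB]
        have := disk_gauss R hR0
        rw [hf, this, hexp_eq]
        field_simp
end

section
/- For every t > 0 there exist k₁ ∈ (1, 1/cos(π/8)] and k₂ ∈ [1/cos(π/8), √2) such that P(t)² = 1 - (1/2)(e^{-k₁²t²/2} + e^{-k₂²t²/2}), where P(t) = (1/√(2π)) ∫_{-t}^{t} e^{-x²/2} dx. -/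
open Real MeasureTheory Set

lemma Msq (x : ℝ) : max |Real.cos x| |Real.sin x| ^ 2 = (1 + |Real.cos (2*x)|)/2 := by
  have h1 := Real.sin_sq_add_cos_sq x
  have h2 : Real.cos (2*x) = Real.cos x ^ 2 - Real.sin x ^ 2 := by
    rw [Real.cos_two_mul]; linarith
  rw [h2]
  rcases le_total (Real.sin x ^ 2) (Real.cos x ^ 2) with h | h
  · have hle : |Real.sin x| ≤ |Real.cos x| := by
      have := Real.sqrt_le_sqrt h; rwa [Real.sqrt_sq_eq_abs, Real.sqrt_sq_eq_abs] at this
    rw [max_eq_left hle, sq_abs, abs_of_nonneg (by linarith)]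
    linarith
  · have hle : |Real.cos x| ≤ |Real.sin x| := by
      have := Real.sqrt_le_sqrt h; rwa [Real.sqrt_sq_eq_abs, Real.sqrt_sq_eq_abs] at this
    rw [max_eq_right hle, sq_abs, abs_of_nonpos (by linarith), neg_sub]
    linarith

lemma M_half (x : ℝ) : (1:ℝ)/2 ≤ max |Real.cos x| |Real.sin x| := by
  have h1 := Real.sin_sq_add_cos_sq x
  by_contra h
  push_neg at h
  have h2 : |Real.cos x| < 1/2 := lt_of_le_of_lt (le_max_left _ _) h
  have h3 : |Real.sin x| < 1/2 := lt_of_le_of_lt (le_max_right _ _) h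
  nlinarith [abs_nonneg (Real.cos x), abs_nonneg (Real.sin x), sq_abs (Real.cos x), sq_abs (Real.sin x)]

lemma M_pos (x : ℝ) : 0 < max |Real.cos x| |Real.sin x| := lt_of_lt_of_le (by norm_num) (M_half x)

lemma inner_int (b : ℝ) : ∫ r in (0:ℝ)..b, r * Real.exp (-r^2/2) = 1 - Real.exp (-b^2/2) := by
  have h : ∀ r ∈ Set.uIcc (0:ℝ) b, HasDerivAt (fun r : ℝ => -Real.exp (-r^2/2)) (r * Real.exp (-r^2/2)) r := by
    intro r _
    have h1 : HasDerivAt (fun r : ℝ => -r^2/2) (-r) r := by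
      have := (hasDerivAt_pow 2 r).neg.div_const 2
      simpa using this.congr_deriv (by ring)
    have := (h1.exp).neg
    exact this.congr_deriv (by ring)
  have hc : IntervalIntegrable (fun r : ℝ => r * Real.exp (-r^2/2)) volume 0 b := by
    apply Continuous.intervalIntegrable; continuity
  rw [intervalIntegral.integral_eq_sub_of_hasDerivAt h hc]
  simp [Real.exp_zero]; ring

noncomputable def EE (t θ : ℝ) : ℝ := Real.exp (-t^2 / (1 + |Real.cos (2*θ)|))

lemma contEE (t : ℝ) : Continuous (EE t) := by
  apply Real.continuous_exp.comp
  apply Continuous.div continuous_const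
  · continuity
  · intro θ; positivity

lemma gmono (a x y : ℝ) (ha : 0 ≤ a) (hx : 0 ≤ x) (hxy : x ≤ y) :
    Real.exp (-a/(1+x)) ≤ Real.exp (-a/(1+y)) := by
  apply Real.exp_le_exp.2
  rw [neg_div, neg_div, neg_le_neg_iff]
  apply div_le_div_of_nonneg_left ha (by linarith) (by linarith)

lemma sum_bounds (a u v : ℝ) (ha : 0 ≤ a) (hu : 0 ≤ u) (hv : 0 ≤ v) (huv : u^2 + v^2 = 1) :
    Real.exp (-a/(1+Real.sqrt 2/2)) + Real.exp (-a) ≤ Real.exp (-a/(1+u)) + Real.exp (-a/(1+v)) ∧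
    Real.exp (-a/(1+u)) + Real.exp (-a/(1+v)) ≤ Real.exp (-a/2) + Real.exp (-a/(1+Real.sqrt 2/2)) := by
  have hs2 : Real.sqrt 2 ^ 2 = 2 := Real.sq_sqrt (by norm_num)
  have hs0 : 0 < Real.sqrt 2 := Real.sqrt_pos.2 (by norm_num)
  have key : ∀ u v : ℝ, 0 ≤ u → 0 ≤ v → u^2+v^2 = 1 → u ≤ v →
      Real.exp (-a/(1+Real.sqrt 2/2)) + Real.exp (-a) ≤ Real.exp (-a/(1+u)) + Real.exp (-a/(1+v)) ∧
      Real.exp (-a/(1+u)) + Real.exp (-a/(1+v)) ≤ Real.exp (-a/2) + Real.exp (-a/(1+Real.sqrt 2/2)) := by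
    intro u v hu hv huv hle
    have h1 : u ≤ Real.sqrt 2 / 2 := by nlinarith
    have h2 : Real.sqrt 2 / 2 ≤ v := by nlinarith
    have h3 : v ≤ 1 := by nlinarith
    constructor
    · have b1 : Real.exp (-a/(1+0)) ≤ Real.exp (-a/(1+u)) := gmono a 0 u ha le_rfl hu
      have b2 : Real.exp (-a/(1+Real.sqrt 2/2)) ≤ Real.exp (-a/(1+v)) := gmono a _ v ha (by positivity) h2
      simp only [add_zero] at b1
      rw [div_one] at b1
      linarith
    · have b1 : Real.exp (-a/(1+u)) ≤ Real.exp (-a/(1+Real.sqrt 2/2)) := gmono a u _ ha hu h1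
      have b2 : Real.exp (-a/(1+v)) ≤ Real.exp (-a/(1+1)) := gmono a v 1 ha hv h3
      have h11 : (1:ℝ)+1 = 2 := by norm_num
      rw [h11] at b2
      linarith
  rcases le_total u v with h | h
  · exact key u v hu hv huv h
  · have := key v u hv hu (by linarith) h
    constructor <;> linarith [this.1, this.2]

lemma EE_add (t θ : ℝ) :
    EE t θ + EE t (θ + π/4) =
      Real.exp (-t^2/(1+|Real.cos (2*θ)|)) + Real.exp (-t^2/(1+|Real.sin (2*θ)|)) := by
  unfold EE
  congr 3
  have : 2 * (θ + π/4) = 2*θ + π/2 := by ring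
  rw [this, Real.cos_add_pi_div_two, abs_neg]




lemma key (t : ℝ) (ht : 0 < t) :
    2 * π * P t ^ 2 = ∫ θ in (-π)..π, (1 - EE t θ) := by
  have hπ := Real.pi_pos
  set M : ℝ → ℝ := fun θ => max |Real.cos θ| |Real.sin θ| with hMdef
  set G : ℝ × ℝ → ℝ := fun p => if p.1 ≤ t / M p.2 then p.1 * Real.exp (-p.1^2/2) else 0 with hGdef
  have hMcont : Continuous M := (continuous_abs.comp Real.continuous_cos).max
    (continuous_abs.comp Real.continuous_sin)
  -- Step 1 : P t ^ 2 in terms of the square integral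
  have h1 : (∫ x in (-t)..t, Real.exp (-x^2/2)) = ∫ x in Ioc (-t) t, Real.exp (-x^2/2) :=
    intervalIntegral.integral_of_le (by linarith)
  have h2 : ∫ p in (Ioc (-t) t ×ˢ Ioc (-t) t), Real.exp (-(p.1^2 + p.2^2)/2) =
      (∫ x in Ioc (-t) t, Real.exp (-x^2/2)) * (∫ x in Ioc (-t) t, Real.exp (-x^2/2)) := by
    rw [Measure.volume_eq_prod, ← setIntegral_prod_mul (fun x => Real.exp (-x^2/2))
      (fun x => Real.exp (-x^2/2))]
    apply setIntegral_congr_fun ((measurableSet_Ioc).prod measurableSet_Ioc)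
    intro p _
    dsimp only
    rw [← Real.exp_add]
    congr 1
    ring
  have h3 : (Ioc (-t) t ×ˢ Ioc (-t) t : Set (ℝ × ℝ)) =ᵐ[volume] (Icc (-t) t ×ˢ Icc (-t) t) := by
    rw [MeasureTheory.ae_eq_set]
    constructor
    · exact measure_mono_null
        (fun p hp => (hp.2 (Set.prod_mono Ioc_subset_Icc_self Ioc_subset_Icc_self hp.1)).elim)
        measure_empty
    · apply measure_mono_null
        (t := ({-t} ×ˢ Icc (-t) t : Set (ℝ×ℝ)) ∪ (Icc (-t) t ×ˢ {-t} : Set (ℝ×ℝ)))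
      · rintro p ⟨hp, hnp⟩
        simp only [Set.mem_prod, Set.mem_Icc, Set.mem_Ioc, Set.mem_union,
          Set.mem_singleton_iff] at hp hnp ⊢
        by_cases hx : -t < p.1
        · have hy : ¬ (-t < p.2) := fun hy => hnp ⟨⟨hx, hp.1.2⟩, hy, hp.2.2⟩
          exact Or.inr ⟨hp.1, le_antisymm (not_lt.1 hy) hp.2.1⟩
        · exact Or.inl ⟨le_antisymm (not_lt.1 hx) hp.1.1, hp.2⟩
      · apply measure_union_null <;>
        · rw [Measure.volume_eq_prod, Measure.prod_prod]
          simp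
  -- Step 2 : polar coordinates
  have hpolar := integral_comp_polarCoord_symm
    ((Icc (-t) t ×ˢ Icc (-t) t).indicator (fun q : ℝ × ℝ => Real.exp (-(q.1^2 + q.2^2)/2)))
  rw [integral_indicator (measurableSet_Icc.prod measurableSet_Icc)] at hpolar
  have htarget : polarCoord.target = Set.Ioi (0:ℝ) ×ˢ Set.Ioo (-π) π := rfl
  rw [htarget] at hpolar
  -- rewrite the polar-side integrand as G
  have h5 : ∫ p in Set.Ioi (0:ℝ) ×ˢ Set.Ioo (-π) π,
      p.1 • ((Icc (-t) t ×ˢ Icc (-t) t).indicator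
        (fun q : ℝ × ℝ => Real.exp (-(q.1^2 + q.2^2)/2)) (polarCoord.symm p)) =
      ∫ p in Set.Ioi (0:ℝ) ×ˢ Set.Ioo (-π) π, G p := by
    apply setIntegral_congr_fun (measurableSet_Ioi.prod measurableSet_Ioo)
    rintro p ⟨hp1, _⟩
    have hp1' : (0:ℝ) < p.1 := hp1
    have hsymm : polarCoord.symm p = (p.1 * Real.cos p.2, p.1 * Real.sin p.2) := rfl
    have hMp := M_pos p.2
    have habs : ∀ x : ℝ, |p.1 * x| = p.1 * |x| := fun x => by
      rw [abs_mul, abs_of_pos hp1']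
    dsimp only
    rw [hsymm, smul_eq_mul]
    show _ = if p.1 ≤ t / M p.2 then p.1 * Real.exp (-p.1^2/2) else 0
    by_cases hmem : p.1 ≤ t / M p.2
    · have hMle : p.1 * M p.2 ≤ t := (le_div_iff₀ hMp).1 hmem
      have hcos : |p.1 * Real.cos p.2| ≤ t := by
        rw [habs]
        exact le_trans (mul_le_mul_of_nonneg_left (le_max_left _ _) hp1'.le) hMle
      have hsin : |p.1 * Real.sin p.2| ≤ t := by
        rw [habs]
        exact le_trans (mul_le_mul_of_nonneg_left (le_max_right _ _) hp1'.le) hMle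
      have hmem2 : ((p.1 * Real.cos p.2, p.1 * Real.sin p.2) : ℝ × ℝ) ∈
          Icc (-t) t ×ˢ Icc (-t) t := ⟨abs_le.1 hcos, abs_le.1 hsin⟩
      rw [Set.indicator_of_mem hmem2, if_pos hmem]
      have hxy : (p.1 * Real.cos p.2)^2 + (p.1 * Real.sin p.2)^2 = p.1^2 := by
        have := Real.sin_sq_add_cos_sq p.2
        nlinarith
      show p.1 * Real.exp (-((p.1 * Real.cos p.2)^2 + (p.1 * Real.sin p.2)^2)/2) =
        p.1 * Real.exp (-p.1^2/2)
      rw [hxy]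
    · have hmem2 : ((p.1 * Real.cos p.2, p.1 * Real.sin p.2) : ℝ × ℝ) ∉
          Icc (-t) t ×ˢ Icc (-t) t := by
        intro hmem2
        apply hmem
        rw [le_div_iff₀ hMp]
        have h1 := abs_le.2 hmem2.1
        have h2 := abs_le.2 hmem2.2
        rw [habs] at h1 h2
        rcases max_cases |Real.cos p.2| |Real.sin p.2| with ⟨he, _⟩ | ⟨he, _⟩ <;> rw [he]
        · exact h1
        · exact h2
      rw [Set.indicator_of_notMem hmem2, if_neg hmem, mul_zero]
  -- Step 3 : Fubini
  have hGmeas : Measurable G := by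
    rw [hGdef]
    apply Measurable.ite
    · apply measurableSet_le measurable_fst
      exact (continuous_const.div (hMcont.comp continuous_snd)
        (fun p => (M_pos p.2).ne')).measurable
    · exact ((continuous_fst.mul (((continuous_fst.pow 2).neg.div_const 2).rexp)).measurable)
    · exact measurable_const
  have hGint : Integrable G (((volume : Measure ℝ).restrict (Set.Ioi 0)).prod
      ((volume : Measure ℝ).restrict (Set.Ioo (-π) π))) := by
    set ν := ((volume : Measure ℝ).restrict (Set.Ioi 0)).prod
      ((volume : Measure ℝ).restrict (Set.Ioo (-π) π)) with hν
    have hfin : ν (Set.Ioc (0:ℝ) (2*t) ×ˢ (Set.univ : Set ℝ)) < ⊤ := by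
      rw [hν, Measure.prod_prod]
      apply ENNReal.mul_lt_top
      · exact lt_of_le_of_lt (Measure.restrict_apply_le _ _)
          (by rw [Real.volume_Ioc]; exact ENNReal.ofReal_lt_top)
      · rw [Measure.restrict_apply_univ, Real.volume_Ioo]
        exact ENNReal.ofReal_lt_top
    apply Integrable.mono'
      (g := fun p : ℝ × ℝ =>
        (Set.Ioc (0:ℝ) (2*t) ×ˢ (Set.univ : Set ℝ)).indicator (fun _ => (2*t:ℝ)) p)
    · rw [integrable_indicator_iff (measurableSet_Ioc.prod MeasurableSet.univ)]
      exact integrableOn_const hfin.ne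
    · exact hGmeas.aestronglyMeasurable
    · have hae : ∀ᵐ p ∂ν, p ∈ Set.Ioi (0:ℝ) ×ˢ Set.Ioo (-π) π := by
        rw [hν, Measure.prod_restrict]
        exact ae_restrict_mem (measurableSet_Ioi.prod measurableSet_Ioo)
      filter_upwards [hae] with p hp
      obtain ⟨hp1, hp2⟩ := hp
      have hp1' : (0:ℝ) < p.1 := hp1
      have hGp : G p = if p.1 ≤ t / M p.2 then p.1 * Real.exp (-p.1^2/2) else 0 := rfl
      by_cases hc : p.1 ≤ t / M p.2
      · have h2t : p.1 ≤ 2*t := by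
          refine le_trans hc (le_trans (div_le_div_of_nonneg_left ht.le (by norm_num)
            (M_half p.2)) ?_)
          rw [div_div_eq_mul_div, div_one]
          linarith
        rw [hGp, if_pos hc]
        have hin : p ∈ Set.Ioc (0:ℝ) (2*t) ×ˢ (Set.univ : Set ℝ) := ⟨⟨hp1', h2t⟩, trivial⟩
        rw [Set.indicator_of_mem hin]
        have hexp : Real.exp (-p.1^2/2) ≤ 1 := by
          rw [← Real.exp_zero]
          exact Real.exp_le_exp.2 (by nlinarith [sq_nonneg p.1])
        rw [Real.norm_eq_abs, abs_of_nonneg (by positivity)]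
        nlinarith
      · rw [hGp, if_neg hc, norm_zero]
        exact Set.indicator_nonneg (fun _ _ => by linarith) p
  have h6 : ∫ p in Set.Ioi (0:ℝ) ×ˢ Set.Ioo (-π) π, G p =
      ∫ θ in Set.Ioo (-π) π, ∫ r in Set.Ioi (0:ℝ), G (r, θ) := by
    rw [Measure.volume_eq_prod, ← Measure.prod_restrict]
    exact integral_prod_symm G hGint
  have h7 : ∀ θ : ℝ, ∫ r in Set.Ioi (0:ℝ), G (r, θ) = 1 - EE t θ := by
    intro θ
    have hM := M_pos θ
    have hcpos : 0 < t / M θ := div_pos ht hM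
    have hcongr : ∫ r in Set.Ioi (0:ℝ), G (r, θ) =
        ∫ r in Set.Ioi (0:ℝ), (Set.Iic (t / M θ)).indicator
          (fun r => r * Real.exp (-r^2/2)) r := by
      apply setIntegral_congr_fun measurableSet_Ioi
      intro r _
      show (if r ≤ t / M θ then r * Real.exp (-r^2/2) else 0) = _
      rw [Set.indicator_apply]
      simp only [Set.mem_Iic]
    rw [hcongr, setIntegral_indicator measurableSet_Iic, Set.Ioi_inter_Iic,
      ← intervalIntegral.integral_of_le hcpos.le, inner_int]
    have hM2 : M θ ^ 2 = (1 + |Real.cos (2*θ)|)/2 := Msq θ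
    have hd : (0:ℝ) < 1 + |Real.cos (2*θ)| := by positivity
    show 1 - Real.exp (-(t / M θ)^2/2) = 1 - Real.exp (-t^2 / (1 + |Real.cos (2*θ)|))
    congr 1
    rw [div_pow, hM2]
    congr 1
    field_simp
  have h8 : ∫ θ in Set.Ioo (-π) π, (1 - EE t θ) = ∫ θ in (-π)..π, (1 - EE t θ) := by
    rw [intervalIntegral.integral_of_le (by linarith), MeasureTheory.integral_Ioc_eq_integral_Ioo]
  have hsqrt : Real.sqrt (2*π) ^ 2 = 2*π := Real.sq_sqrt (by positivity)
  have h2π : (2:ℝ)*π ≠ 0 := by positivity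
  calc 2 * π * P t ^ 2
      = 2*π * ((1/Real.sqrt (2*π))^2 * (∫ x in (-t)..t, Real.exp (-x^2/2))^2) := by
        simp only [P]; ring
    _ = (∫ x in Ioc (-t) t, Real.exp (-x^2/2)) * (∫ x in Ioc (-t) t, Real.exp (-x^2/2)) := by
        rw [h1, div_pow, one_pow, hsqrt]
        field_simp
    _ = ∫ p in (Icc (-t) t ×ˢ Icc (-t) t), Real.exp (-(p.1^2 + p.2^2)/2) := by
        rw [← h2, setIntegral_congr_set h3]
    _ = ∫ p in Set.Ioi (0:ℝ) ×ˢ Set.Ioo (-π) π, G p := by rw [← hpolar, h5]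
    _ = ∫ θ in Set.Ioo (-π) π, ∫ r in Set.Ioi (0:ℝ), G (r, θ) := h6
    _ = ∫ θ in Set.Ioo (-π) π, (1 - EE t θ) := by
        apply setIntegral_congr_fun measurableSet_Ioo
        intro θ _
        exact h7 θ
    _ = ∫ θ in (-π)..π, (1 - EE t θ) := h8




lemma EE_periodic (t : ℝ) : Function.Periodic (EE t) (2*π) := by
  intro θ
  simp only [EE]
  rw [show 2*(θ+2*π) = (2*θ + 2*π) + 2*π by ring, Real.cos_add_two_pi, Real.cos_add_two_pi]

lemma shift (t : ℝ) : ∫ θ in (-π)..π, EE t (θ + π/4) = ∫ θ in (-π)..π, EE t θ := by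
  rw [intervalIntegral.integral_comp_add_right (fun θ => EE t θ)]
  have h := (EE_periodic t).intervalIntegral_add_eq (-π+π/4) (-π)
  rw [show -π+π/4+2*π = π+π/4 by ring, show -π+2*π = π by ring] at h
  exact h

lemma int_lt (t : ℝ) (ht : 0 < t) :
    2*π * (Real.exp (-t^2/(1+Real.sqrt 2/2)) + Real.exp (-t^2)) <
      (∫ θ in (-π)..π, (EE t θ + EE t (θ + π/4))) ∧
    (∫ θ in (-π)..π, (EE t θ + EE t (θ + π/4))) <
      2*π * (Real.exp (-t^2/2) + Real.exp (-t^2/(1+Real.sqrt 2/2))) := by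
  have hπ := Real.pi_pos
  have hcontF : Continuous (fun θ => EE t θ + EE t (θ + π/4)) :=
    (contEE t).add ((contEE t).comp (continuous_id.add continuous_const))
  have hmem : π/8 ∈ Set.Icc (-π) π := ⟨by linarith, by linarith⟩
  have hFval : EE t (π/8) + EE t (π/8 + π/4) = 2 * Real.exp (-t^2/(1+Real.sqrt 2/2)) := by
    rw [EE_add, show 2*(π/8) = π/4 by ring, Real.cos_pi_div_four, Real.sin_pi_div_four,
      abs_of_nonneg (by positivity)]
    ring
  have hs0 : (0:ℝ) < Real.sqrt 2 := Real.sqrt_pos.2 (by norm_num)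
  have hs2 : Real.sqrt 2 ^ 2 = 2 := Real.sq_sqrt (by norm_num)
  have hslt : Real.sqrt 2 < 2 := by nlinarith
  have ht2 : 0 < t^2 := by positivity
  have hd : (0:ℝ) < 1 + Real.sqrt 2/2 := by positivity
  have hble : ∀ θ : ℝ,
      Real.exp (-t^2/(1+Real.sqrt 2/2)) + Real.exp (-t^2) ≤ EE t θ + EE t (θ + π/4) ∧
      EE t θ + EE t (θ + π/4) ≤ Real.exp (-t^2/2) + Real.exp (-t^2/(1+Real.sqrt 2/2)) := by
    intro θ
    rw [EE_add]
    exact sum_bounds (t^2) _ _ (by positivity) (abs_nonneg _) (abs_nonneg _)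
      (by rw [sq_abs, sq_abs]; exact Real.cos_sq_add_sin_sq _)
  have h_c_lt_1 : Real.exp (-t^2/(1+Real.sqrt 2/2)) < Real.exp (-t^2/2) := by
    apply Real.exp_lt_exp.2
    rw [neg_div, neg_div, neg_lt_neg_iff]
    exact div_lt_div_of_pos_left ht2 hd (by linarith)
  have h_2_lt_c : Real.exp (-t^2) < Real.exp (-t^2/(1+Real.sqrt 2/2)) := by
    apply Real.exp_lt_exp.2
    rw [neg_div, neg_lt_neg_iff]
    have := div_lt_div_of_pos_left ht2 zero_lt_one (by linarith : (1:ℝ) < 1 + Real.sqrt 2/2)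
    rwa [div_one] at this
  constructor
  · have := intervalIntegral.integral_lt_integral_of_continuousOn_of_le_of_exists_lt
      (f := fun _ : ℝ => Real.exp (-t^2/(1+Real.sqrt 2/2)) + Real.exp (-t^2))
      (g := fun θ => EE t θ + EE t (θ + π/4)) (by linarith : -π < π)
      continuousOn_const hcontF.continuousOn
      (fun θ _ => (hble θ).1)
      ⟨π/8, hmem, by rw [hFval]; linarith⟩
    rwa [intervalIntegral.integral_const, smul_eq_mul, show π - -π = 2*π by ring] at this
  · have := intervalIntegral.integral_lt_integral_of_continuousOn_of_le_of_exists_lt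
      (g := fun _ : ℝ => Real.exp (-t^2/2) + Real.exp (-t^2/(1+Real.sqrt 2/2)))
      (f := fun θ => EE t θ + EE t (θ + π/4)) (by linarith : -π < π)
      hcontF.continuousOn continuousOn_const
      (fun θ _ => (hble θ).2)
      ⟨π/8, hmem, by rw [hFval]; linarith⟩
    rwa [intervalIntegral.integral_const, smul_eq_mul, show π - -π = 2*π by ring] at this

theorem P_sq_two_exp (t : ℝ) (ht : 0 < t) :
    ∃ k₁ k₂ : ℝ, 1 < k₁ ∧ k₁ ≤ 1 / Real.cos (π / 8) ∧
      1 / Real.cos (π / 8) ≤ k₂ ∧ k₂ < Real.sqrt 2 ∧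
      P t ^ 2 = 1 - (1 / 2) * (Real.exp (-k₁ ^ 2 * t ^ 2 / 2) +
        Real.exp (-k₂ ^ 2 * t ^ 2 / 2)) := by
  have hπ := Real.pi_pos
  have hkey := key t ht
  have hintE : IntervalIntegrable (EE t) volume (-π) π := (contEE t).intervalIntegrable _ _
  have hintE' : IntervalIntegrable (fun θ => EE t (θ + π/4)) volume (-π) π :=
    ((contEE t).comp (continuous_id.add continuous_const)).intervalIntegrable _ _
  have h1 : ∫ θ in (-π)..π, (1 - EE t θ) = 2*π - ∫ θ in (-π)..π, EE t θ := by
    rw [intervalIntegral.integral_sub intervalIntegrable_const hintE,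
      intervalIntegral.integral_const, smul_eq_mul, show π - -π = 2*π by ring, mul_one]
  have hA : (∫ θ in (-π)..π, EE t θ) = 2*π - 2*π*P t^2 := by
    rw [h1] at hkey; linarith
  have hsum : (∫ θ in (-π)..π, (EE t θ + EE t (θ + π/4))) = 2*π * (2 - 2*P t^2) := by
    rw [intervalIntegral.integral_add hintE hintE', shift, hA]; ring
  obtain ⟨hlow, hup⟩ := int_lt t ht
  rw [hsum] at hlow hup
  set τ := 2 - 2 * P t ^ 2 with hτdef
  have hτlow : Real.exp (-t^2/(1+Real.sqrt 2/2)) + Real.exp (-t^2) < τ :=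
    (mul_lt_mul_iff_right₀ (by positivity)).1 hlow
  have hτup : τ < Real.exp (-t^2/2) + Real.exp (-t^2/(1+Real.sqrt 2/2)) :=
    (mul_lt_mul_iff_right₀ (by positivity)).1 hup
  -- algebra about c = 1 / cos (π/8)
  have hs0 : (0:ℝ) < Real.sqrt 2 := Real.sqrt_pos.2 (by norm_num)
  have hs2 : Real.sqrt 2 ^ 2 = 2 := Real.sq_sqrt (by norm_num)
  have hslt : Real.sqrt 2 < 2 := by nlinarith
  set s := Real.sqrt 2 with hsdef
  set q := Real.sqrt (2 + s) with hqdef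
  have hq0 : 0 < q := Real.sqrt_pos.2 (by linarith)
  have hq2 : q^2 = 2 + s := Real.sq_sqrt (by linarith)
  have hcosval : Real.cos (π/8) = q/2 := Real.cos_pi_div_eight
  have hcpos : 0 < Real.cos (π/8) := by rw [hcosval]; positivity
  set c := 1 / Real.cos (π/8) with hcdef
  have hcval : c = 2/q := by rw [hcdef, hcosval, one_div_div]
  have hc_gt1 : 1 < c := by
    rw [hcval, lt_div_iff₀ hq0, one_mul]
    nlinarith
  have hc_lt : c < s := by
    rw [hcval, div_lt_iff₀ hq0]
    have h4 : (2:ℝ)^2 < (s*q)^2 := by nlinarith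
    exact lt_of_pow_lt_pow_left₀ 2 (by positivity) h4
  set f := fun k : ℝ => Real.exp (-k^2*t^2/2) with hfdef
  have hcontf : Continuous f := by
    apply Real.continuous_exp.comp
    continuity
  have hfc : f c = Real.exp (-t^2/(1+s/2)) := by
    rw [hfdef]
    have hc2 : c^2 = 4/(2+s) := by
      rw [hcval, div_pow, hq2]
      norm_num
    dsimp only
    rw [hc2]
    congr 1
    field_simp
    ring
  have hf1 : f 1 = Real.exp (-t^2/2) := by
    rw [hfdef]; dsimp only; norm_num
  have hfs : f s = Real.exp (-t^2) := by
    rw [hfdef]; dsimp only; rw [hs2]; congr 1; ring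
  have hτlow' : f c + f s < τ := by rw [hfc, hfs]; exact hτlow
  have hτup' : τ < f 1 + f c := by rw [hf1, hfc]; exact hτup
  by_cases hcase : 2 * f c ≤ τ
  · -- k₂ = c, find k₁ ∈ (1, c]
    set g := fun k : ℝ => f k + f c with hgdef
    have hsub := intermediate_value_Icc' (f := g) (le_of_lt hc_gt1)
      (hcontf.add continuous_const).continuousOn
    have hmem : τ ∈ Set.Icc (g c) (g 1) := by
      constructor
      · rw [hgdef]; dsimp only; linarith
      · rw [hgdef]; dsimp only; linarith
    obtain ⟨k₁, hk₁mem, hk₁⟩ := hsub hmem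
    have hk₁ne : k₁ ≠ 1 := by
      intro h
      rw [h] at hk₁
      have : g 1 = τ := hk₁
      rw [hgdef] at this; dsimp only at this
      linarith
    refine ⟨k₁, c, lt_of_le_of_ne hk₁mem.1 (fun h => hk₁ne h.symm), hk₁mem.2, le_refl c,
      hc_lt, ?_⟩
    have : f k₁ + f c = τ := hk₁
    rw [hfdef] at this; dsimp only at this
    rw [hτdef] at this
    linarith
  · -- k₁ = c, find k₂ ∈ [c, √2)
    push_neg at hcase
    set g := fun k : ℝ => f c + f k with hgdef
    have hsub := intermediate_value_Icc' (f := g) (le_of_lt hc_lt)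
      (continuous_const.add hcontf).continuousOn
    have hmem : τ ∈ Set.Icc (g s) (g c) := by
      constructor
      · rw [hgdef]; dsimp only; linarith
      · rw [hgdef]; dsimp only; linarith
    obtain ⟨k₂, hk₂mem, hk₂⟩ := hsub hmem
    have hk₂ne : k₂ ≠ s := by
      intro h
      rw [h] at hk₂
      have : g s = τ := hk₂
      rw [hgdef] at this; dsimp only at this
      linarith
    refine ⟨c, k₂, hc_gt1, le_refl c, hk₂mem.1, lt_of_le_of_ne hk₂mem.2 hk₂ne, ?_⟩
    have : f c + f k₂ = τ := hk₂
    rw [hfdef] at this; dsimp only at this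
    rw [hτdef] at this
    linarith
end

section
/- For all t ≥ 0, (P(t))² = 1 - (4/π) ∫₀^{π/4} exp(-t²/(2cos²φ)) dφ, where P(t) = (1/√(2π)) ∫_{-t}^{t} e^{-x²/2} dx. -/
open Real MeasureTheory

open intervalIntegral Set

-- cos positivity on the interval
lemma cos_pos_uIcc : ∀ φ ∈ Set.uIcc (0:ℝ) (π/4), 0 < Real.cos φ := by
  intro φ hφ
  rw [Set.uIcc_of_le (by positivity)] at hφ
  apply Real.cos_pos_of_mem_Ioo
  constructor
  · linarith [hφ.1, Real.pi_pos]
  · linarith [hφ.2, Real.pi_pos]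

lemma cos_pos_uIoc : ∀ φ ∈ Set.uIoc (0:ℝ) (π/4), 0 < Real.cos φ := by
  intro φ hφ
  rw [Set.uIoc_of_le (by positivity)] at hφ
  apply Real.cos_pos_of_mem_Ioo
  constructor
  · linarith [hφ.1, Real.pi_pos]
  · linarith [hφ.2, Real.pi_pos]

lemma inner_hasDerivAt (c : ℝ) (hc : c ≠ 0) (x : ℝ) :
    HasDerivAt (fun y : ℝ => Real.exp (-y ^ 2 / (2 * c ^ 2)))
      ((-x / c ^ 2) * Real.exp (-x ^ 2 / (2 * c ^ 2))) x := by
  have h1 : HasDerivAt (fun y : ℝ => -y ^ 2 / (2 * c ^ 2)) (-(2 * x ^ 1) / (2 * c ^ 2)) x :=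
    ((hasDerivAt_pow 2 x).neg).div_const _
  have h2 := h1.exp
  convert h2 using 1
  field_simp

lemma cont_integrand (s : ℝ) :
    IntervalIntegrable (fun φ => Real.exp (-s ^ 2 / (2 * Real.cos φ ^ 2))) volume 0 (π/4) := by
  apply ContinuousOn.intervalIntegrable
  apply Real.continuous_exp.comp_continuousOn
  apply ContinuousOn.div continuousOn_const
  · exact (continuous_const.mul (Real.continuous_cos.pow 2)).continuousOn
  · intro φ hφ
    have := cos_pos_uIcc φ hφ
    positivity

lemma g_hasDerivAt (t : ℝ) :
    HasDerivAt (fun s => ∫ φ in (0:ℝ)..(π/4), Real.exp (-s ^ 2 / (2 * Real.cos φ ^ 2)))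
      (∫ φ in (0:ℝ)..(π/4), (-t / Real.cos φ ^ 2) * Real.exp (-t ^ 2 / (2 * Real.cos φ ^ 2))) t := by
  have meas : ∀ s : ℝ, AEStronglyMeasurable
      (fun φ => Real.exp (-s ^ 2 / (2 * Real.cos φ ^ 2)))
      (volume.restrict (Set.uIoc (0:ℝ) (π/4))) := by
    intro s
    exact (Real.measurable_exp.comp ((measurable_const.div
      ((measurable_const.mul (Real.measurable_cos.pow_const 2)))))).aestronglyMeasurable
  have meas' : AEStronglyMeasurable
      (fun φ => (-t / Real.cos φ ^ 2) * Real.exp (-t ^ 2 / (2 * Real.cos φ ^ 2)))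
      (volume.restrict (Set.uIoc (0:ℝ) (π/4))) := by
    apply Measurable.aestronglyMeasurable
    exact (measurable_const.div (Real.measurable_cos.pow_const 2)).mul
      (Real.measurable_exp.comp (measurable_const.div
        (measurable_const.mul (Real.measurable_cos.pow_const 2))))
  have key := intervalIntegral.hasDerivAt_integral_of_dominated_loc_of_deriv_le
    (F := fun s φ => Real.exp (-s ^ 2 / (2 * Real.cos φ ^ 2)))
    (F' := fun s φ => (-s / Real.cos φ ^ 2) * Real.exp (-s ^ 2 / (2 * Real.cos φ ^ 2)))
    (x₀ := t) (a := 0) (b := π/4) (bound := fun _ => (|t| + 1) * 2)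
    (s := Metric.ball t 1) (Metric.ball_mem_nhds t one_pos) (Filter.Eventually.of_forall fun s => meas s) (cont_integrand t) meas' ?_ 
    (intervalIntegrable_const) ?_
  · exact key.2
  · -- bound
    apply Filter.Eventually.of_forall
    intro φ hφ x hx
    have hcos := cos_pos_uIoc φ hφ
    have hcos2 : (1:ℝ)/2 ≤ Real.cos φ ^ 2 := by
      have h1 : Real.cos (π/4) ≤ Real.cos φ := by
        apply Real.cos_le_cos_of_nonneg_of_le_pi
        · rw [Set.uIoc_of_le (by positivity)] at hφ; exact le_of_lt hφ.1
        · rw [Set.uIoc_of_le (by positivity)] at hφ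
          linarith [hφ.2, Real.pi_pos]
        · rw [Set.uIoc_of_le (by positivity)] at hφ; exact hφ.2.trans (by linarith [Real.pi_pos])
      rw [Real.cos_pi_div_four] at h1
      nlinarith [Real.sq_sqrt (by norm_num : (2:ℝ) ≥ 0), Real.sqrt_nonneg 2]
    have hxb : |x| ≤ |t| + 1 := by
      have := mem_ball_iff_norm.mp hx
      have : |x - t| < 1 := this
      calc |x| = |(x - t) + t| := by ring_nf
        _ ≤ |x - t| + |t| := abs_add_le _ _
        _ ≤ |t| + 1 := by linarith
    have hexp : Real.exp (-x ^ 2 / (2 * Real.cos φ ^ 2)) ≤ 1 := by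
      apply Real.exp_le_one_iff.mpr
      apply div_nonpos_of_nonpos_of_nonneg
      · nlinarith [sq_nonneg x]
      · positivity
    rw [Real.norm_eq_abs, abs_mul, abs_div, abs_neg]
    have h1 : |Real.cos φ ^ 2| = Real.cos φ ^ 2 := abs_of_pos (by positivity)
    rw [h1]
    have hinv : |x| / Real.cos φ ^ 2 ≤ (|t| + 1) * 2 := by
      rw [div_le_iff₀ (by positivity)]
      nlinarith [abs_nonneg x]
    calc |x| / Real.cos φ ^ 2 * |Real.exp (-x ^ 2 / (2 * Real.cos φ ^ 2))|
        ≤ |x| / Real.cos φ ^ 2 * 1 := by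
          apply mul_le_mul_of_nonneg_left _ (by positivity)
          rw [abs_of_pos (Real.exp_pos _)]; exact hexp
      _ ≤ (|t| + 1) * 2 := by rw [mul_one]; exact hinv
  · -- differentiability
    apply Filter.Eventually.of_forall
    intro φ hφ x hx
    exact inner_hasDerivAt (Real.cos φ) (ne_of_gt (cos_pos_uIoc φ hφ)) x

lemma subst_lemma (t : ℝ) :
    (∫ φ in (0:ℝ)..(π/4), (t / Real.cos φ ^ 2) * Real.exp (-t ^ 2 / (2 * Real.cos φ ^ 2)))
      = Real.exp (-t ^ 2 / 2) * ∫ u in (0:ℝ)..t, Real.exp (-u ^ 2 / 2) := by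
  have h1 : (∫ φ in (0:ℝ)..(π/4), (t / Real.cos φ ^ 2) •
      ((fun u => Real.exp (-(t ^ 2 + u ^ 2) / 2)) ∘ (fun φ => t * Real.tan φ)) φ)
      = ∫ u in (t * Real.tan 0)..(t * Real.tan (π/4)), Real.exp (-(t ^ 2 + u ^ 2) / 2) := by
    apply intervalIntegral.integral_comp_smul_deriv
    · intro φ hφ
      have hc := ne_of_gt (cos_pos_uIcc φ hφ)
      have := (Real.hasDerivAt_tan hc).const_mul t
      rw [show t / Real.cos φ ^ 2 = t * (1 / Real.cos φ ^ 2) by ring]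
      exact this
    · apply ContinuousOn.div continuousOn_const ((Real.continuous_cos.pow 2).continuousOn)
      intro φ hφ
      exact pow_ne_zero 2 (ne_of_gt (cos_pos_uIcc φ hφ))
    · exact Real.continuous_exp.comp (by continuity)
  have h2 : (∫ φ in (0:ℝ)..(π/4), (t / Real.cos φ ^ 2) * Real.exp (-t ^ 2 / (2 * Real.cos φ ^ 2)))
      = ∫ φ in (0:ℝ)..(π/4), (t / Real.cos φ ^ 2) •
        ((fun u => Real.exp (-(t ^ 2 + u ^ 2) / 2)) ∘ (fun φ => t * Real.tan φ)) φ := by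
    apply intervalIntegral.integral_congr
    intro φ hφ
    have hc := ne_of_gt (cos_pos_uIcc φ hφ)
    simp only [Function.comp_apply, smul_eq_mul]
    congr 1
    have hi := Real.inv_one_add_tan_sq hc
    have ht1 : Real.tan φ ^ 2 + 1 = 1 / Real.cos φ ^ 2 := by
      rw [one_div, ← hi, inv_inv]; ring
    congr 1
    linear_combination (t ^ 2 / 2) * ht1
  rw [h2, h1, Real.tan_zero, Real.tan_pi_div_four, mul_zero, mul_one]
  have h3 : (∫ u in (0:ℝ)..t, Real.exp (-(t ^ 2 + u ^ 2) / 2))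
      = ∫ u in (0:ℝ)..t, Real.exp (-t ^ 2 / 2) * Real.exp (-u ^ 2 / 2) := by
    apply intervalIntegral.integral_congr
    intro u _
    show Real.exp (-(t ^ 2 + u ^ 2) / 2) = Real.exp (-t ^ 2 / 2) * Real.exp (-u ^ 2 / 2)
    rw [← Real.exp_add]
    congr 1
    ring
  rw [h3, intervalIntegral.integral_const_mul]

lemma gauss_cont : Continuous (fun x : ℝ => Real.exp (-x ^ 2 / 2)) := by
  apply Real.continuous_exp.comp; continuity

lemma even_split (t : ℝ) :
    (∫ x in (-t)..t, Real.exp (-x ^ 2 / 2)) = 2 * ∫ x in (0:ℝ)..t, Real.exp (-x ^ 2 / 2) := by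
  have h1 : (∫ x in (-t)..(0:ℝ), Real.exp (-x ^ 2 / 2)) + (∫ x in (0:ℝ)..t, Real.exp (-x ^ 2 / 2))
      = ∫ x in (-t)..t, Real.exp (-x ^ 2 / 2) :=
    intervalIntegral.integral_add_adjacent_intervals
      (gauss_cont.intervalIntegrable _ _) (gauss_cont.intervalIntegrable _ _)
  have h2 : (∫ x in (-t)..(0:ℝ), Real.exp (-x ^ 2 / 2)) = ∫ x in (0:ℝ)..t, Real.exp (-x ^ 2 / 2) := by
    have := intervalIntegral.integral_comp_neg (a := (0:ℝ)) (b := t)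
      (fun x => Real.exp (-x ^ 2 / 2))
    simp only [neg_zero] at this
    rw [← this]
    apply intervalIntegral.integral_congr
    intro x _
    norm_num
  rw [← h1, h2]; ring

lemma P_hasDerivAt (s : ℝ) :
    HasDerivAt P ((1 / Real.sqrt (2 * π)) * (2 * Real.exp (-s ^ 2 / 2))) s := by
  have hP : P = fun s => (1 / Real.sqrt (2 * π)) * (2 * ∫ x in (0:ℝ)..s, Real.exp (-x ^ 2 / 2)) := by
    funext s
    rw [P, even_split]
  rw [hP]
  have hI : HasDerivAt (fun u => ∫ x in (0:ℝ)..u, Real.exp (-x ^ 2 / 2))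
      (Real.exp (-s ^ 2 / 2)) s :=
    (gauss_cont.integral_hasStrictDerivAt 0 s).hasDerivAt
  exact (hI.const_mul 2).const_mul _

theorem P_sq_integral_rep (t : ℝ) (ht : 0 ≤ t) :
    P t ^ 2 = 1 - (4 / π) * ∫ φ in (0:ℝ)..(π / 4),
      Real.exp (-t ^ 2 / (2 * Real.cos φ ^ 2)) := by
  set g : ℝ → ℝ := fun s => ∫ φ in (0:ℝ)..(π/4), Real.exp (-s ^ 2 / (2 * Real.cos φ ^ 2)) with hg
  have hpi := Real.pi_pos
  have hc2 : (1 / Real.sqrt (2 * π)) ^ 2 = 1 / (2 * π) := by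
    rw [div_pow, one_pow, Real.sq_sqrt (by positivity)]
  -- the difference function has zero derivative
  have key : ∀ s : ℝ, HasDerivAt (fun s => P s ^ 2 - (1 - (4 / π) * g s)) 0 s := by
    intro s
    have h1 : HasDerivAt (fun s => P s ^ 2)
        (2 * P s ^ 1 * ((1 / Real.sqrt (2 * π)) * (2 * Real.exp (-s ^ 2 / 2)))) s := by
      simpa using (P_hasDerivAt s).fun_pow 2
    have h2 : HasDerivAt (fun s => 1 - (4 / π) * g s)
        (-((4 / π) * ∫ φ in (0:ℝ)..(π/4),
          (-s / Real.cos φ ^ 2) * Real.exp (-s ^ 2 / (2 * Real.cos φ ^ 2)))) s :=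
      ((g_hasDerivAt s).const_mul (4 / π)).const_sub 1
    have heq : 2 * P s ^ 1 * ((1 / Real.sqrt (2 * π)) * (2 * Real.exp (-s ^ 2 / 2)))
        = -((4 / π) * ∫ φ in (0:ℝ)..(π/4),
          (-s / Real.cos φ ^ 2) * Real.exp (-s ^ 2 / (2 * Real.cos φ ^ 2))) := by
      have hneg : (∫ φ in (0:ℝ)..(π/4),
          (-s / Real.cos φ ^ 2) * Real.exp (-s ^ 2 / (2 * Real.cos φ ^ 2)))
          = -∫ φ in (0:ℝ)..(π/4),
            (s / Real.cos φ ^ 2) * Real.exp (-s ^ 2 / (2 * Real.cos φ ^ 2)) := by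
        rw [← intervalIntegral.integral_neg]
        apply intervalIntegral.integral_congr
        intro φ _
        ring
      rw [hneg, subst_lemma]
      rw [P, even_split]
      rw [pow_one]
      linear_combination (8 * Real.exp (-s ^ 2 / 2) *
        (∫ u in (0:ℝ)..s, Real.exp (-u ^ 2 / 2))) * hc2
    have := h1.fun_sub h2
    rw [heq] at this
    simpa using this
  -- constant function
  have hconst : ∀ s : ℝ, P s ^ 2 - (1 - (4 / π) * g s) = P 0 ^ 2 - (1 - (4 / π) * g 0) := by
    intro s
    apply is_const_of_deriv_eq_zero (f := fun s => P s ^ 2 - (1 - (4 / π) * g s))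
    · intro x
      exact (key x).differentiableAt
    · intro x
      exact (key x).deriv
  have hP0 : P 0 = 0 := by
    simp [P]
  have hg0 : g 0 = π / 4 := by
    show (∫ φ in (0:ℝ)..(π/4), Real.exp (-(0:ℝ) ^ 2 / (2 * Real.cos φ ^ 2))) = π / 4
    have : ∀ φ ∈ Set.uIcc (0:ℝ) (π/4), Real.exp (-(0:ℝ) ^ 2 / (2 * Real.cos φ ^ 2)) = 1 := by
      intro φ _
      norm_num
    rw [intervalIntegral.integral_congr this]
    simp
  have := hconst t
  rw [hP0, hg0] at this
  have hfin : (4 / π) * (π / 4) = 1 := by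
    field_simp
  rw [hfin] at this
  have hgt : (∫ φ in (0:ℝ)..(π/4), Real.exp (-t ^ 2 / (2 * Real.cos φ ^ 2))) = g t := rfl
  rw [hgt]
  norm_num at this
  linarith [this]
end

section
/- For all t > 0, the error-function-type probability P(t) = (1/√(2π))∫_{-t}^t e^{-x²/2}dx satisfies the two-sided bound of Shenton: 1 - 4√(2/π)·e^{-t²/2}/(3t + √(t²+8)) < P(t) < 1 - (1/√(2π))(√(t²+4) - t)e^{-t²/2} — and moreover the geometric lower bound √(1 - e^{-t²/2}) exceeds the Shenton lower bound for all sufficiently small t > 0. -/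
open Real MeasureTheory

/-- Shenton's lower bound for P(t). -/
noncomputable def shentonLower (t : ℝ) : ℝ :=
  1 - 4 * Real.sqrt (2 / π) * Real.exp (-t ^ 2 / 2) / (3 * t + Real.sqrt (t ^ 2 + 8))

/-- Shenton's upper bound for P(t). -/
noncomputable def shentonUpper (t : ℝ) : ℝ :=
  1 - (1 / Real.sqrt (2 * π)) * (Real.sqrt (t ^ 2 + 4) - t) * Real.exp (-t ^ 2 / 2)

open Filter Set Topology

noncomputable def phi (x : ℝ) : ℝ := Real.exp (-x ^ 2 / 2)
noncomputable def G (t : ℝ) : ℝ := ∫ x in (0:ℝ)..t, phi x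
noncomputable def Chalf : ℝ := Real.sqrt (2 * π) / 2
noncomputable def mlo (t : ℝ) : ℝ := (Real.sqrt (t ^ 2 + 4) - t) / 2
noncomputable def Mhi (t : ℝ) : ℝ := 4 / (3 * t + Real.sqrt (t ^ 2 + 8))

lemma phi_cont : Continuous phi := by
  unfold phi; continuity

lemma phi_pos (x : ℝ) : 0 < phi x := Real.exp_pos _

lemma phiD (x : ℝ) : HasDerivAt phi (-x * phi x) x := by
  have h : HasDerivAt (fun x : ℝ => -x ^ 2 / 2) (-x) x := by
    have := ((hasDerivAt_pow 2 x).neg).div_const 2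
    exact this.congr_deriv (by ring)
  have := h.exp
  unfold phi
  simpa [mul_comm] using this

lemma hG (t : ℝ) : HasDerivAt G (phi t) t :=
  intervalIntegral.integral_hasDerivAt_right (phi_cont.intervalIntegrable _ _)
    (phi_cont.stronglyMeasurableAtFilter _ _) phi_cont.continuousAt

lemma phi_eqfun : phi = fun x : ℝ => Real.exp (-(1/2) * x ^ 2) := by
  funext x; unfold phi; ring_nf

lemma phi_intOn : IntegrableOn phi (Set.Ioi (0:ℝ)) := by
  rw [phi_eqfun]
  exact (integrable_exp_neg_mul_sq (by norm_num : (0:ℝ) < 1/2)).integrableOn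

lemma int_phi : ∫ x in Set.Ioi (0:ℝ), phi x = Chalf := by
  rw [phi_eqfun]
  rw [integral_gaussian_Ioi (1/2)]
  unfold Chalf
  norm_num
  rw [mul_comm]

lemma G_tendsto : Tendsto G atTop (𝓝 Chalf) := by
  rw [← int_phi]
  exact intervalIntegral_tendsto_integral_Ioi 0 phi_intOn tendsto_id

lemma phi_tendsto : Tendsto phi atTop (𝓝 0) := by
  have h0 : Tendsto (fun x : ℝ => x ^ 2) atTop atTop := tendsto_pow_atTop two_ne_zero
  have h1 : Tendsto (fun x : ℝ => -x ^ 2) atTop atBot := tendsto_neg_atBot_iff.mpr h0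
  have h2 : Tendsto (fun x : ℝ => -x ^ 2 / 2) atTop atBot := h1.atBot_div_const (by norm_num)
  have := Real.tendsto_exp_atBot.comp h2
  unfold phi
  exact this

lemma sqrtD {c : ℝ} (hc : 0 < c) (t : ℝ) :
    HasDerivAt (fun t : ℝ => Real.sqrt (t ^ 2 + c)) (t / Real.sqrt (t ^ 2 + c)) t := by
  have h0 : 0 < t ^ 2 + c := by positivity
  have h1 : HasDerivAt (fun t : ℝ => t ^ 2 + c) (2 * t) t := by
    simpa using (hasDerivAt_pow 2 t).add_const c
  have h2 := (Real.hasDerivAt_sqrt (ne_of_gt h0)).comp t h1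
  refine h2.congr_deriv ?_
  have hs : 0 < Real.sqrt (t ^ 2 + c) := Real.sqrt_pos.2 h0
  field_simp

lemma mloD (x : ℝ) : HasDerivAt mlo ((x / Real.sqrt (x ^ 2 + 4) - 1) / 2) x := by
  have := ((sqrtD (show (0:ℝ) < 4 by norm_num) x).sub (hasDerivAt_id x)).div_const 2
  exact this

lemma sqrt8_pos (x : ℝ) : 0 < Real.sqrt (x ^ 2 + 8) := Real.sqrt_pos.2 (by positivity)

lemma den_pos {x : ℝ} (hx : 0 < x) : 0 < 3 * x + Real.sqrt (x ^ 2 + 8) := by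
  have := sqrt8_pos x; linarith

lemma MhiD {x : ℝ} (hx : 0 < x) :
    HasDerivAt Mhi ((0 * (3 * x + Real.sqrt (x ^ 2 + 8)) - 4 * (3 + x / Real.sqrt (x ^ 2 + 8))) /
      (3 * x + Real.sqrt (x ^ 2 + 8)) ^ 2) x := by
  have hd : HasDerivAt (fun t : ℝ => 3 * t + Real.sqrt (t ^ 2 + 8))
      (3 + x / Real.sqrt (x ^ 2 + 8)) x := by
    have h1 : HasDerivAt (fun t : ℝ => 3 * t) 3 x := by
      simpa using (hasDerivAt_id x).const_mul 3
    exact h1.add (sqrtD (by norm_num) x)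
  exact (hasDerivAt_const x 4).div hd (ne_of_gt (den_pos hx))

lemma key2 {x : ℝ} (hx : 0 < x) : x ^ 3 + 3 * x < (x ^ 2 + 1) * Real.sqrt (x ^ 2 + 4) := by
  set s := Real.sqrt (x ^ 2 + 4) with hs
  have hs0 : 0 < s := Real.sqrt_pos.2 (by positivity)
  have hs2 : s ^ 2 = x ^ 2 + 4 := Real.sq_sqrt (by positivity)
  have hB2 : ((x ^ 2 + 1) * s) ^ 2 = (x ^ 3 + 3 * x) ^ 2 + 4 := by
    have : ((x ^ 2 + 1) * s) ^ 2 = (x ^ 2 + 1) ^ 2 * s ^ 2 := by ring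
    rw [this, hs2]; ring
  by_contra h
  push_neg at h
  have hBnn : 0 ≤ (x ^ 2 + 1) * s := by positivity
  have := pow_le_pow_left₀ hBnn h 2
  linarith [hB2]

lemma key1 {x : ℝ} (hx : 0 < x) : x ^ 3 + 6 * x < (x ^ 2 + 2) * Real.sqrt (x ^ 2 + 8) := by
  set s := Real.sqrt (x ^ 2 + 8) with hs
  have hs0 : 0 < s := sqrt8_pos x
  have hs2 : s ^ 2 = x ^ 2 + 8 := Real.sq_sqrt (by positivity)
  have hB2 : ((x ^ 2 + 2) * s) ^ 2 = (x ^ 3 + 6 * x) ^ 2 + 32 := by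
    have : ((x ^ 2 + 2) * s) ^ 2 = (x ^ 2 + 2) ^ 2 * s ^ 2 := by ring
    rw [this, hs2]; ring
  by_contra h
  push_neg at h
  have hBnn : 0 ≤ (x ^ 2 + 2) * s := by positivity
  have := pow_le_pow_left₀ hBnn h 2
  linarith [hB2]

noncomputable def F1 (t : ℝ) : ℝ := Chalf - G t - phi t * Mhi t
noncomputable def F2 (t : ℝ) : ℝ := Chalf - G t - phi t * mlo t

lemma F2D (x : ℝ) : HasDerivAt F2
    (0 - phi x - ((-x * phi x) * mlo x + phi x * ((x / Real.sqrt (x ^ 2 + 4) - 1) / 2))) x :=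
  ((hasDerivAt_const x Chalf).sub (hG x)).sub ((phiD x).mul (mloD x))

lemma F1D {x : ℝ} (hx : 0 < x) : HasDerivAt F1
    (0 - phi x - ((-x * phi x) * Mhi x + phi x *
      ((0 * (3 * x + Real.sqrt (x ^ 2 + 8)) - 4 * (3 + x / Real.sqrt (x ^ 2 + 8))) /
        (3 * x + Real.sqrt (x ^ 2 + 8)) ^ 2))) x :=
  ((hasDerivAt_const x Chalf).sub (hG x)).sub ((phiD x).mul (MhiD hx))

lemma F2D_neg {x : ℝ} (hx : 0 < x) :
    0 - phi x - ((-x * phi x) * mlo x + phi x * ((x / Real.sqrt (x ^ 2 + 4) - 1) / 2)) < 0 := by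
  set s := Real.sqrt (x ^ 2 + 4) with hs
  have hs0 : 0 < s := Real.sqrt_pos.2 (by positivity)
  have hs2 : s ^ 2 = x ^ 2 + 4 := Real.sq_sqrt (by positivity)
  have hbr : x * mlo x - (x / s - 1) / 2 - 1 < 0 := by
    have e1 : x * mlo x - (x / s - 1) / 2 - 1 = ((s - x) * (x * s + 1) - 2 * s) / (2 * s) := by
      rw [mlo]
      field_simp
      ring
    rw [e1]
    apply div_neg_of_neg_of_pos _ (by linarith)
    have h3 : x * s ^ 2 = x ^ 3 + 4 * x := by rw [hs2]; ring
    nlinarith [key2 hx, h3]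
  have : 0 - phi x - ((-x * phi x) * mlo x + phi x * ((x / s - 1) / 2)) =
      phi x * (x * mlo x - (x / s - 1) / 2 - 1) := by ring
  rw [this]
  exact mul_neg_of_pos_of_neg (phi_pos x) hbr

lemma F1D_pos {x : ℝ} (hx : 0 < x) :
    0 < 0 - phi x - ((-x * phi x) * Mhi x + phi x *
      ((0 * (3 * x + Real.sqrt (x ^ 2 + 8)) - 4 * (3 + x / Real.sqrt (x ^ 2 + 8))) /
        (3 * x + Real.sqrt (x ^ 2 + 8)) ^ 2)) := by
  set s := Real.sqrt (x ^ 2 + 8) with hs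
  have hs0 : 0 < s := sqrt8_pos x
  have hs2 : s ^ 2 = x ^ 2 + 8 := Real.sq_sqrt (by positivity)
  have hd0 : 0 < 3 * x + s := by linarith
  have hbr : 0 < x * Mhi x - (0 * (3 * x + s) - 4 * (3 + x / s)) / (3 * x + s) ^ 2 - 1 := by
    have e1 : x * Mhi x - (0 * (3 * x + s) - 4 * (3 + x / s)) / (3 * x + s) ^ 2 - 1 =
        (4 * x * (3 * x + s) * s + 12 * s + 4 * x - (3 * x + s) ^ 2 * s) / ((3 * x + s) ^ 2 * s) := by
      rw [Mhi]
      field_simp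
      ring
    rw [e1]
    apply div_pos _ (by positivity)
    have h3 : x * s ^ 2 = x ^ 3 + 8 * x := by rw [hs2]; ring
    have h4 : s ^ 3 = x ^ 2 * s + 8 * s := by
      have : s ^ 3 = s ^ 2 * s := by ring
      rw [this, hs2]; ring
    nlinarith [key1 hx, h3, h4]
  have : 0 - phi x - ((-x * phi x) * Mhi x + phi x *
      ((0 * (3 * x + s) - 4 * (3 + x / s)) / (3 * x + s) ^ 2)) =
      phi x * (x * Mhi x - (0 * (3 * x + s) - 4 * (3 + x / s)) / (3 * x + s) ^ 2 - 1) := by ring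
  rw [this]
  exact mul_pos (phi_pos x) hbr

lemma mlo_nonneg {t : ℝ} (ht : 0 ≤ t) : 0 ≤ mlo t := by
  rw [mlo]
  have h1 : t ≤ Real.sqrt (t ^ 2 + 4) := by
    have := Real.sqrt_le_sqrt (show t ^ 2 ≤ t ^ 2 + 4 by linarith)
    rw [Real.sqrt_sq_eq_abs] at this
    linarith [le_abs_self t]
  linarith

lemma mlo_le_one {t : ℝ} (ht : 0 ≤ t) : mlo t ≤ 1 := by
  rw [mlo]
  have h1 : Real.sqrt (t ^ 2 + 4) ≤ t + 2 := by
    rw [show t ^ 2 + 4 = t ^ 2 + 4 from rfl]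
    have := Real.sqrt_le_sqrt (show t ^ 2 + 4 ≤ (t + 2) ^ 2 by nlinarith)
    rwa [Real.sqrt_sq (by linarith)] at this
  linarith

lemma Mhi_nonneg {t : ℝ} (ht : 0 ≤ t) : 0 ≤ Mhi t := by
  rw [Mhi]
  have := sqrt8_pos t
  positivity

lemma Mhi_le_two {t : ℝ} (ht : 0 ≤ t) : Mhi t ≤ 2 := by
  rw [Mhi]
  have h2 : (2:ℝ) ≤ Real.sqrt (t ^ 2 + 8) := by
    have := Real.sqrt_le_sqrt (show (2:ℝ) ^ 2 ≤ t ^ 2 + 8 by nlinarith)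
    rwa [Real.sqrt_sq (by norm_num)] at this
  have hd : (2:ℝ) ≤ 3 * t + Real.sqrt (t ^ 2 + 8) := by linarith
  calc 4 / (3 * t + Real.sqrt (t ^ 2 + 8)) ≤ 4 / 2 := by
        apply div_le_div_of_nonneg_left (by norm_num) (by norm_num) hd
    _ = 2 := by norm_num

lemma F2_tendsto : Tendsto F2 atTop (𝓝 0) := by
  have h1 : Tendsto (fun t => Chalf - G t) atTop (𝓝 0) := by
    have := tendsto_const_nhds (x := Chalf) (f := atTop (α := ℝ)) |>.sub G_tendsto
    simpa using this
  have h2 : Tendsto (fun t => phi t * mlo t) atTop (𝓝 0) := by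
    apply tendsto_of_tendsto_of_tendsto_of_le_of_le' tendsto_const_nhds phi_tendsto
    · filter_upwards [eventually_ge_atTop (0:ℝ)] with t ht
      exact mul_nonneg (phi_pos t).le (mlo_nonneg ht)
    · filter_upwards [eventually_ge_atTop (0:ℝ)] with t ht
      nlinarith [phi_pos t, mlo_le_one ht]
  have := h1.sub h2
  unfold F2
  simpa using this

lemma F1_tendsto : Tendsto F1 atTop (𝓝 0) := by
  have h1 : Tendsto (fun t => Chalf - G t) atTop (𝓝 0) := by
    have := tendsto_const_nhds (x := Chalf) (f := atTop (α := ℝ)) |>.sub G_tendsto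
    simpa using this
  have h2 : Tendsto (fun t => phi t * Mhi t) atTop (𝓝 0) := by
    have h2phi : Tendsto (fun t : ℝ => 2 * phi t) atTop (𝓝 0) := by
      simpa using phi_tendsto.const_mul 2
    apply tendsto_of_tendsto_of_tendsto_of_le_of_le' tendsto_const_nhds h2phi
    · filter_upwards [eventually_ge_atTop (0:ℝ)] with t ht
      exact mul_nonneg (phi_pos t).le (Mhi_nonneg ht)
    · filter_upwards [eventually_ge_atTop (0:ℝ)] with t ht
      nlinarith [phi_pos t, Mhi_le_two ht]
  have := h1.sub h2
  unfold F1
  simpa using this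

lemma F2_pos {t : ℝ} (ht : 0 < t) : 0 < F2 t := by
  have anti : StrictAntiOn F2 (Ici t) := by
    apply strictAntiOn_of_deriv_neg (convex_Ici t)
    · exact fun x _ => (F2D x).continuousAt.continuousWithinAt
    · intro x hx
      rw [interior_Ici] at hx
      rw [(F2D x).deriv]
      exact F2D_neg (ht.trans hx)
  have h1 : F2 (t + 1) < F2 t := anti (self_mem_Ici) (mem_Ici.mpr (by linarith)) (by linarith)
  have h0 : 0 ≤ F2 (t + 1) := by
    apply le_of_tendsto F2_tendsto
    filter_upwards [eventually_ge_atTop (t + 1)] with u hu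
    rcases eq_or_lt_of_le hu with h | h
    · rw [h]
    · exact (anti (mem_Ici.mpr (by linarith)) (mem_Ici.mpr (by linarith)) h).le
  linarith

lemma F1_neg {t : ℝ} (ht : 0 < t) : F1 t < 0 := by
  have mono : StrictMonoOn F1 (Ici t) := by
    apply strictMonoOn_of_deriv_pos (convex_Ici t)
    · exact fun x hx => (F1D (ht.trans_le hx)).continuousAt.continuousWithinAt
    · intro x hx
      rw [interior_Ici] at hx
      rw [(F1D (ht.trans hx)).deriv]
      exact F1D_pos (ht.trans hx)
  have h1 : F1 t < F1 (t + 1) := mono (self_mem_Ici) (mem_Ici.mpr (by linarith)) (by linarith)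
  have h0 : F1 (t + 1) ≤ 0 := by
    apply ge_of_tendsto F1_tendsto
    filter_upwards [eventually_ge_atTop (t + 1)] with u hu
    rcases eq_or_lt_of_le hu with h | h
    · rw [h]
    · exact (mono (mem_Ici.mpr (by linarith)) (mem_Ici.mpr (by linarith)) h).le
  linarith

lemma P_eq (t : ℝ) : P t = 2 / Real.sqrt (2 * π) * G t := by
  have hc : Continuous (fun x : ℝ => Real.exp (-x ^ 2 / 2)) := phi_cont
  have h1 : (∫ x in (-t)..(0:ℝ), Real.exp (-x ^ 2 / 2)) = ∫ x in (0:ℝ)..t, Real.exp (-x ^ 2 / 2) := by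
    have h := intervalIntegral.integral_comp_neg (a := (0:ℝ)) (b := t)
      (fun x => Real.exp (-x ^ 2 / 2))
    simp only [neg_zero, neg_sq] at h
    rw [← h]
  have h2 := intervalIntegral.integral_add_adjacent_intervals (μ := volume)
    (hc.intervalIntegrable (-t) 0) (hc.intervalIntegrable 0 t)
  have hG' : (∫ x in (0:ℝ)..t, Real.exp (-x ^ 2 / 2)) = G t := rfl
  rw [P, ← h2, h1, hG']
  ring

theorem shenton_bounds_and_comparison :
    (∀ t : ℝ, 0 < t → shentonLower t < P t ∧ P t < shentonUpper t) ∧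
    (∃ ε : ℝ, 0 < ε ∧ ∀ t : ℝ, 0 < t → t < ε →
      shentonLower t < Real.sqrt (1 - Real.exp (-t ^ 2 / 2))) := by
  have hr : (0:ℝ) < Real.sqrt (2 * π) := Real.sqrt_pos.2 (by positivity)
  have hsq : Real.sqrt (2 / π) = 2 / Real.sqrt (2 * π) := by
    rw [show (2:ℝ) / π = 4 / (2 * π) by
      rw [div_eq_div_iff Real.pi_ne_zero (by positivity)]; ring]
    rw [Real.sqrt_div (by norm_num : (0:ℝ) ≤ 4) (2 * π),
      show Real.sqrt 4 = 2 by
        rw [show (4:ℝ) = 2 ^ 2 by norm_num, Real.sqrt_sq (by norm_num : (0:ℝ) ≤ 2)]]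
  constructor
  · intro t ht
    have hF1 := F1_neg ht
    have hF2 := F2_pos ht
    have hd := den_pos ht
    constructor
    · rw [shentonLower, P_eq, hsq]
      have hL : 1 - 4 * (2 / Real.sqrt (2 * π)) * Real.exp (-t ^ 2 / 2) /
            (3 * t + Real.sqrt (t ^ 2 + 8))
          = 2 / Real.sqrt (2 * π) * (Chalf - phi t * Mhi t) := by
        rw [Chalf, Mhi, phi]
        field_simp
      rw [hL]
      have hlt : Chalf - phi t * Mhi t < G t := by unfold F1 at hF1; linarith
      exact mul_lt_mul_of_pos_left hlt (by positivity)
    · rw [shentonUpper, P_eq]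
      have hU : 1 - 1 / Real.sqrt (2 * π) * (Real.sqrt (t ^ 2 + 4) - t) * Real.exp (-t ^ 2 / 2)
          = 2 / Real.sqrt (2 * π) * (Chalf - phi t * mlo t) := by
        rw [Chalf, mlo, phi]
        field_simp
      rw [hU]
      have hlt : G t < Chalf - phi t * mlo t := by unfold F2 at hF2; linarith
      exact mul_lt_mul_of_pos_left hlt (by positivity)
  · refine ⟨1/10, by norm_num, fun t ht ht' => ?_⟩
    have hd := den_pos ht
    have hl0 : shentonLower t < 0 := by
      rw [shentonLower, sub_neg]
      apply (one_lt_div hd).mpr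
      have ht2 : t ^ 2 < 1/100 := by nlinarith
      have h1 : (0.995:ℝ) ≤ Real.exp (-t ^ 2 / 2) := by
        have := Real.add_one_le_exp (-t ^ 2 / 2)
        linarith
      have hs : Real.sqrt (t ^ 2 + 8) < 2.831 := by
        have h := Real.sqrt_lt_sqrt (by positivity) (show t ^ 2 + 8 < 2.831 ^ 2 by nlinarith)
        rwa [Real.sqrt_sq (by norm_num : (0:ℝ) ≤ 2.831)] at h
      have hsp : (0.796:ℝ) < Real.sqrt (2 / π) := by
        rw [show (0.796:ℝ) = Real.sqrt (0.796 ^ 2) by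
          rw [Real.sqrt_sq (by norm_num : (0:ℝ) ≤ 0.796)]]
        apply Real.sqrt_lt_sqrt (by norm_num)
        rw [lt_div_iff₀ Real.pi_pos]
        nlinarith [Real.pi_lt_d2]
      have hmain : (3.16:ℝ) < 4 * Real.sqrt (2 / π) * Real.exp (-t ^ 2 / 2) := by
        nlinarith [hsp, h1, Real.exp_pos (-t ^ 2 / 2)]
      linarith
    exact hl0.trans_le (Real.sqrt_nonneg _)
end
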